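/- Let b > 0 and let μ_b denote the Laplace measure on ℝ with scale b, i.e. the measure on ℝ with density x ↦ (1/(2b)) * exp(-|x|/b) with respect to Lebesgue measure. For any two real numbers a₁, a₂ and any measurable set S ⊆ ℝ, the shifted Laplace measures satisfy μ_b(S - a₁) ≤ exp(|a₁ - a₂|/b) * μ_b(S - a₂); equivalently, the probability that a₁ plus Laplace(b) noise lands in S is at most exp(|a₁ - a₂|/b) times the probability that a₂ plus Laplace(b) noise lands in S. -/

import Mathlib

open MeasureTheory Real

/-- The Laplace measure on ℝ with scale `b`: density `x ↦ (1/(2b)) * exp (-|x|/b)`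
with respect to Lebesgue measure. -/
noncomputable def laplaceMeasure (b : ℝ) : Measure ℝ :=
  MeasureTheory.volume.withDensity fun x => ENNReal.ofReal ((1 / (2 * b)) * Real.exp (-|x| / b))

lemma laplaceMeasure_image (b : ℝ) (a : ℝ) (S : Set ℝ) (hS : MeasurableSet S) :
    laplaceMeasure b ((fun x => x - a) '' S) =
      ∫⁻ x in S, ENNReal.ofReal ((1 / (2 * b)) * Real.exp (-|x - a| / b)) := by
  have hm : MeasurableSet ((fun x => x - a) '' S) :=
    (MeasurableEquiv.subRight a).measurableEmbedding.measurableSet_image.2 hS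
  rw [laplaceMeasure, withDensity_apply _ hm]
  exact ((measurePreserving_sub_right volume a).setLIntegral_comp_emb
    (MeasurableEquiv.subRight a).measurableEmbedding _ S).symm

/-- For any two shifts `a₁, a₂` and any measurable set `S ⊆ ℝ`, the shifted Laplace
measures satisfy `μ_b(S - a₁) ≤ exp(|a₁ - a₂|/b) * μ_b(S - a₂)`. -/
theorem laplace_shift_ratio_bound (b : ℝ) (hb : 0 < b) (a₁ a₂ : ℝ) (S : Set ℝ)
    (hS : MeasurableSet S) :
    laplaceMeasure b ((fun x => x - a₁) '' S) ≤
      ENNReal.ofReal (Real.exp (|a₁ - a₂| / b)) *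
        laplaceMeasure b ((fun x => x - a₂) '' S) := by
  rw [laplaceMeasure_image b a₁ S hS, laplaceMeasure_image b a₂ S hS,
    ← lintegral_const_mul' _ _ ENNReal.ofReal_ne_top]
  refine lintegral_mono fun x => ?_
  rw [← ENNReal.ofReal_mul (Real.exp_nonneg _)]
  refine ENNReal.ofReal_le_ofReal ?_
  rw [mul_left_comm, ← Real.exp_add]
  have h2b : (0:ℝ) ≤ 1 / (2 * b) := by positivity
  refine mul_le_mul_of_nonneg_left (Real.exp_le_exp.2 ?_) h2b
  rw [← add_div, div_le_div_iff_of_pos_right hb]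
  have := abs_sub_abs_le_abs_sub (x - a₂) (x - a₁)
  have h : (x - a₂) - (x - a₁) = a₁ - a₂ := by ring
  rw [h] at this
  linarith
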